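/- Let N ≥ 4 be an even natural number. Every edge clique cover of the graph G' contains at least (N−1)(N−3) cliques: if 𝔘 is a family of cliques of G' such that the two endpoints of every edge of G' lie together in some member of 𝔘, then the cardinality of 𝔘 is at least (N−1)(N−3). -/

import Mathlib

/-- The graph `G'` whose vertices are the 2-element subsets of `Fin N`, two such
subsets being adjacent iff they are disjoint. -/
def Gpair (N : ℕ) : SimpleGraph {s : Finset (Fin N) // s.card = 2} where
  Adj a b := Disjoint a.1 b.1
  symm := ⟨fun a b h => h.symm⟩
  loopless := ⟨by
    intro a h
    rw [disjoint_self] at h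
    simpa [h] using a.2⟩

abbrev Vt (N : ℕ) := {t : Finset (Fin N) // t.card = 2}

theorem edge_clique_cover_lower_bound (N : ℕ) (h4 : 4 ≤ N) (he : Even N)
    (F : Set (Set {t : Finset (Fin N) // t.card = 2}))
    (hclique : ∀ C ∈ F, (Gpair N).IsClique C)
    (hcover : ∀ v w, (Gpair N).Adj v w → ∃ C ∈ F, v ∈ C ∧ w ∈ C) :
    (N - 1) * (N - 3) ≤ F.ncard := by
  classical
  obtain ⟨m, hm⟩ := he
  have hmN : N = 2 * m := by omega
  have hm2 : 2 ≤ m := by omega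
  -- the finset of all ordered adjacent pairs
  set P : Finset ((Vt N) × (Vt N)) := Finset.univ.filter (fun p => Disjoint p.1.1 p.2.1) with hP
  -- degree count
  have hdeg : ∀ v : (Vt N), Fintype.card {w : (Vt N) // Disjoint v.1 w.1} = (N - 2).choose 2 := by
    intro v
    have hcompl : (v.1ᶜ : Finset (Fin N)).card = N - 2 := by
      rw [Finset.card_compl, v.2, Fintype.card_fin]
    have e : {w : (Vt N) // Disjoint v.1 w.1} ≃ ((v.1ᶜ : Finset (Fin N)).powersetCard 2 : Finset _) :=
      { toFun := fun w => ⟨w.1.1, by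
          rw [Finset.mem_powersetCard]
          refine ⟨fun x hx => Finset.mem_compl.mpr (fun hxv => ?_), w.1.2⟩
          exact Finset.disjoint_left.mp w.2 hxv hx⟩
        invFun := fun t => ⟨⟨t.1, (Finset.mem_powersetCard.mp t.2).2⟩, by
          have hsub := (Finset.mem_powersetCard.mp t.2).1
          exact Finset.disjoint_left.mpr (fun x hxv hxt =>
            Finset.mem_compl.mp (hsub hxt) hxv)⟩
        left_inv := fun w => rfl
        right_inv := fun t => rfl }
    rw [Fintype.card_congr e, Fintype.card_coe, Finset.card_powersetCard, hcompl]
  -- total count of ordered adjacent pairs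
  have hPcard : P.card = N.choose 2 * (N - 2).choose 2 := by
    have h1 : P.card = Fintype.card {p : (Vt N) × (Vt N) // Disjoint p.1.1 p.2.1} := by
      rw [Fintype.card_subtype]
    rw [h1]
    rw [Fintype.card_congr (Equiv.subtypeProdEquivSigmaSubtype (fun (a b : (Vt N)) => Disjoint a.1 b.1)),
      Fintype.card_sigma]
    simp only [hdeg]
    rw [Finset.sum_const, Finset.card_univ, Fintype.card_finset_len, Fintype.card_fin, smul_eq_mul]
  -- F is finite
  have hFfin : F.Finite := Set.toFinite F
  set FS : Finset (Set (Vt N)) := hFfin.toFinset with hFS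
  set pairs : Set (Vt N) → Finset ((Vt N) × (Vt N)) :=
    fun C => Finset.univ.filter (fun p : (Vt N) × (Vt N) => p.1 ∈ C ∧ p.2 ∈ C ∧ p.1 ≠ p.2) with hpairs
  -- every adjacent ordered pair lies in some clique's pair set
  have hsub : P ⊆ FS.biUnion pairs := by
    intro p hp
    simp only [hP, Finset.mem_filter, Finset.mem_univ, true_and] at hp
    have hne : p.1 ≠ p.2 := by
      intro h
      rw [h, disjoint_self] at hp
      have h2 := p.2.2
      rw [hp] at h2
      simp at h2
    obtain ⟨C, hCF, h1, h2⟩ := hcover p.1 p.2 hp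
    refine Finset.mem_biUnion.mpr ⟨C, hFfin.mem_toFinset.mpr hCF, ?_⟩
    simp [hpairs, h1, h2, hne]
  -- per-clique bound
  have hclbound : ∀ C ∈ FS, (pairs C).card ≤ m * (m - 1) := by
    intro C hC
    have hCF : C ∈ F := hFfin.mem_toFinset.mp hC
    set Cf : Finset (Vt N) := C.toFinset with hCf
    have hmemCf : ∀ x : (Vt N), x ∈ Cf ↔ x ∈ C := fun x => Set.mem_toFinset
    -- size of the clique is at most m
    have hk : Cf.card ≤ m := by
      have hdisj : (Cf : Set (Vt N)).PairwiseDisjoint (fun s : (Vt N) => s.1) := by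
        intro a ha b hb hab
        exact hclique C hCF (hmemCf a |>.mp ha) (hmemCf b |>.mp hb) hab
      have hcard : (Cf.biUnion (fun s : (Vt N) => s.1)).card = 2 * Cf.card := by
        rw [Finset.card_biUnion (fun a ha b hb hab => hdisj ha hb hab)]
        rw [Finset.sum_congr rfl (fun s _ => s.2)]
        rw [Finset.sum_const, smul_eq_mul, Nat.mul_comm]
      have hle : (Cf.biUnion (fun s : (Vt N) => s.1)).card ≤ N := by
        simpa using Finset.card_le_univ (Cf.biUnion (fun s : (Vt N) => s.1))
      omega
    have hsubOff : pairs C ⊆ Cf.offDiag := by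
      intro p hp
      simp only [hpairs, Finset.mem_filter, Finset.mem_univ, true_and] at hp
      exact Finset.mem_offDiag.mpr ⟨(hmemCf _).mpr hp.1, (hmemCf _).mpr hp.2.1, hp.2.2⟩
    calc (pairs C).card ≤ Cf.offDiag.card := Finset.card_le_card hsubOff
      _ = Cf.card * Cf.card - Cf.card := Finset.offDiag_card _
      _ = Cf.card * (Cf.card - 1) := by rw [Nat.mul_sub, Nat.mul_one]
      _ ≤ m * (m - 1) := Nat.mul_le_mul hk (Nat.sub_le_sub_right hk 1)
  -- put counting together
  have hmain : N.choose 2 * (N - 2).choose 2 ≤ FS.card * (m * (m - 1)) := by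
    calc N.choose 2 * (N - 2).choose 2 = P.card := hPcard.symm
      _ ≤ (FS.biUnion pairs).card := Finset.card_le_card hsub
      _ ≤ ∑ C ∈ FS, (pairs C).card := Finset.card_biUnion_le
      _ ≤ ∑ _C ∈ FS, m * (m - 1) := Finset.sum_le_sum hclbound
      _ = FS.card * (m * (m - 1)) := by rw [Finset.sum_const, smul_eq_mul]
  -- arithmetic
  have hc1 : N.choose 2 = m * (N - 1) := by
    calc N.choose 2 = N * (N - 1) / 2 := Nat.choose_two_right N
      _ = 2 * (m * (N - 1)) / 2 := by rw [hmN, Nat.mul_assoc]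
      _ = m * (N - 1) := Nat.mul_div_cancel_left _ (by norm_num)
  have hN2 : N - 2 = 2 * (m - 1) := by omega
  have hN3 : N - 2 - 1 = N - 3 := by omega
  have hc2 : (N - 2).choose 2 = (m - 1) * (N - 3) := by
    calc (N - 2).choose 2 = (N - 2) * (N - 2 - 1) / 2 := Nat.choose_two_right _
      _ = 2 * ((m - 1) * (N - 3)) / 2 := by rw [hN3, hN2, Nat.mul_assoc]
      _ = (m - 1) * (N - 3) := Nat.mul_div_cancel_left _ (by norm_num)
  rw [hc1, hc2] at hmain
  have hncard : F.ncard = FS.card := Set.ncard_eq_toFinset_card F hFfin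
  rw [hncard]
  have hpos : 0 < m * (m - 1) := by
    have : 1 ≤ m - 1 := by omega
    exact Nat.mul_pos (by omega) (by omega)
  refine Nat.le_of_mul_le_mul_right ?_ hpos
  calc (N - 1) * (N - 3) * (m * (m - 1)) = m * (N - 1) * ((m - 1) * (N - 3)) := by ring
    _ ≤ FS.card * (m * (m - 1)) := hmain
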